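/- arXiv:1001.4856 — 4 statements merged into one kernel-verified Lean document; each statement's English description precedes it below -/
import Mathlib

section
/- Let N be a compact topological group that is nilpotent of class at most 2 and whose commutator subgroup N' is discrete. Then the center Z(N) is open (hence of finite index) in N. -/
open scoped commutatorElement

/-- If `N` is a compact topological group that is nilpotent of class at most 2 (i.e.
`[N,N] ≤ Z(N)`) and its commutator subgroup is discrete, then the center of `N` is open
and of finite index. -/
theorem center_open_of_class_two_discrete_commutator {N : Type*} [Group N]
    [TopologicalSpace N] [IsTopologicalGroup N] [CompactSpace N]
    (h2 : commutator N ≤ Subgroup.center N)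
    (hd : DiscreteTopology (commutator N)) :
    IsOpen ((Subgroup.center N : Subgroup N) : Set N) ∧
      (Subgroup.center N).FiniteIndex := by
  -- get an open set V around 1 meeting the commutator subgroup only in 1
  obtain ⟨V, hVopen, hV⟩ : ∃ V : Set N, IsOpen V ∧
      (Subtype.val ⁻¹' V : Set (commutator N)) = {1} := by
    have h1 : IsOpen ({1} : Set (commutator N)) := isOpen_discrete _
    rw [isOpen_induced_iff] at h1
    obtain ⟨V, hVo, hVeq⟩ := h1
    exact ⟨V, hVo, hVeq⟩
  have h1V : (1 : N) ∈ V := by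
    have : ((1 : commutator N) : N) ∈ V := by
      have : (1 : commutator N) ∈ (Subtype.val ⁻¹' V : Set (commutator N)) := by
        rw [hV]; rfl
      exact this
    simpa using this
  -- for each g, a neighborhood where commutators with small elements are trivial
  have key : ∀ g : N, ∃ W ∈ nhds g, ∃ U ∈ nhds (1 : N),
      ∀ a ∈ W, ∀ b ∈ U, ⁅a, b⁆ = 1 := by
    intro g
    have hc : Continuous fun p : N × N => ⁅p.1, p.2⁆ := by
      simp only [commutatorElement_def]
      continuity
    have ht : Filter.Tendsto (fun p : N × N => ⁅p.1, p.2⁆) (nhds (g, 1)) (nhds 1) := by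
      have := hc.tendsto (g, 1)
      simpa using this
    have hmem : (fun p : N × N => ⁅p.1, p.2⁆) ⁻¹' V ∈ nhds (g, (1 : N)) :=
      ht (hVopen.mem_nhds h1V)
    rw [nhds_prod_eq, Filter.mem_prod_iff] at hmem
    obtain ⟨W, hW, U, hU, hWU⟩ := hmem
    refine ⟨W, hW, U, hU, fun a ha b hb => ?_⟩
    have hcomm : ⁅a, b⁆ ∈ commutator N :=
      Subgroup.commutator_mem_commutator (Subgroup.mem_top a) (Subgroup.mem_top b)
    have hVmem : ⁅a, b⁆ ∈ V := hWU (Set.mk_mem_prod ha hb)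
    have : (⟨⁅a, b⁆, hcomm⟩ : commutator N) ∈ (Subtype.val ⁻¹' V : Set (commutator N)) :=
      hVmem
    rw [hV] at this
    exact congrArg Subtype.val this
  choose W hW U hU hWU using key
  -- finite subcover of N
  obtain ⟨t, ht⟩ := isCompact_univ.elim_nhds_subcover W (fun x _ => hW x)
  set U₀ : Set N := ⋂ x ∈ t, U x with hU₀def
  have hU₀ : U₀ ∈ nhds (1 : N) := by
    apply Filter.biInter_mem t.finite_toSet |>.mpr
    exact fun x _ => hU x
  have hsub : U₀ ⊆ (Subgroup.center N : Set N) := by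
    intro b hb
    rw [SetLike.mem_coe, Subgroup.mem_center_iff]
    intro a
    have : a ∈ ⋃ x ∈ t, W x := ht.2 (Set.mem_univ a)
    obtain ⟨x, hx, hax⟩ := Set.mem_iUnion₂.mp this
    have hbU : b ∈ U x := by
      have := Set.mem_iInter₂.mp hb x hx
      exact this
    have hcom : ⁅a, b⁆ = 1 := hWU x a hax b hbU
    have := commutatorElement_eq_one_iff_commute.mp hcom
    exact this.eq
  have hopen : IsOpen ((Subgroup.center N : Subgroup N) : Set N) :=
    Subgroup.isOpen_of_mem_nhds _ (Filter.mem_of_superset hU₀ hsub)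
  have : Finite (N ⧸ Subgroup.center N) :=
    Subgroup.quotient_finite_of_isOpen _ hopen
  exact ⟨hopen, Subgroup.finiteIndex_of_finite_quotient⟩
end

section
/- A compact topological group G is an FC-group (every conjugacy class is finite) if and only if its center Z(G) is open in G (equivalently, G/Z(G) is finite). -/
open Set

section Aux

variable {G : Type*} [Group G]

/-- The conjugacy class of `g` as a range. -/
def conjSet (g : G) : Set G := Set.range (fun c : G => c * g * c⁻¹)

lemma conjClass_eq (g : G) : {y : G | IsConj g y} = conjSet g := by
  ext y
  simp only [Set.mem_setOf_eq, isConj_iff, conjSet, Set.mem_range]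

/-- `Fset G n` : every `(n+1)`-tuple of conjugates of `g` has a repetition. -/
def Fset (G : Type*) [Group G] (n : ℕ) : Set G :=
  {g | ∀ x : Fin (n + 1) → G, ∃ i j, i ≠ j ∧ x i * g * (x i)⁻¹ = x j * g * (x j)⁻¹}

lemma Fset_mono {m n : ℕ} (h : m ≤ n) : Fset G m ⊆ Fset G n := by
  intro g hg x
  obtain ⟨i, j, hij, he⟩ := hg (x ∘ Fin.castLE (by omega))
  exact ⟨Fin.castLE (by omega) i, Fin.castLE (by omega) j,
    fun hc => hij (Fin.castLE_injective _ hc), he⟩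

lemma mem_Fset_card {g : G} (h : (conjSet g).Finite) : g ∈ Fset G h.toFinset.card := by
  intro x
  have hmem : ∀ i, x i * g * (x i)⁻¹ ∈ h.toFinset := by
    intro i
    rw [Set.Finite.mem_toFinset]
    exact ⟨x i, rfl⟩
  obtain ⟨i, j, hij, he⟩ := Fintype.exists_ne_map_eq_of_card_lt
    (fun i : Fin (h.toFinset.card + 1) => (⟨x i * g * (x i)⁻¹, hmem i⟩ : h.toFinset))
    (by simp)
  exact ⟨i, j, hij, congrArg Subtype.val he⟩

lemma card_le_of_mem_Fset {g : G} (h : (conjSet g).Finite) {n : ℕ} (hg : g ∈ Fset G n) :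
    h.toFinset.card ≤ n := by
  by_contra hlt
  push_neg at hlt
  obtain ⟨t, hts, htc⟩ := Finset.exists_subset_card_eq (Nat.succ_le_of_lt hlt)
  have hconj : ∀ y : t, ∃ c : G, c * g * c⁻¹ = (y : G) := by
    intro y
    have : (y : G) ∈ conjSet g := by
      rw [← Set.Finite.mem_toFinset h]
      exact hts y.2
    exact this
  choose c hc using hconj
  have e : Fin (n + 1) ≃ t := (t.equivFin.trans (finCongr htc)).symm
  obtain ⟨i, j, hij, he⟩ := hg (fun i => c (e i))
  rw [hc, hc] at he
  exact hij (e.injective (Subtype.val_injective he))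

lemma covering_of_mem_Fset {g : G} {n : ℕ} (hg : g ∈ Fset G n) (x : Fin n → G)
    (hinj : Function.Injective fun i => x i * g * (x i)⁻¹) (y : G) :
    ∃ i, y * g * y⁻¹ = x i * g * (x i)⁻¹ := by
  obtain ⟨i, j, hij, he⟩ := hg (Fin.snoc x y)
  induction i using Fin.lastCases with
  | last =>
    induction j using Fin.lastCases with
    | last => exact absurd rfl hij
    | cast j =>
      rw [Fin.snoc_last, Fin.snoc_castSucc] at he
      exact ⟨j, he⟩
  | cast i =>
    induction j using Fin.lastCases with
    | last =>
      rw [Fin.snoc_last, Fin.snoc_castSucc] at he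
      exact ⟨i, he.symm⟩
    | cast j =>
      rw [Fin.snoc_castSucc, Fin.snoc_castSucc] at he
      exact absurd (congrArg Fin.castSucc (hinj he)) hij

lemma comm_iff_conj {x g : G} : x * g = g * x ↔ x * g * x⁻¹ = g := by
  constructor
  · intro h; rw [h, mul_inv_cancel_right]
  · intro h; conv_rhs => rw [← h]
    group

end Aux

section Top

variable {G : Type*} [Group G] [TopologicalSpace G] [IsTopologicalGroup G]

lemma isClosed_Fset [T2Space G] (n : ℕ) : IsClosed (Fset G n) := by
  have : Fset G n = ⋂ x : Fin (n + 1) → G, ⋃ i, ⋃ j,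
      {g : G | i ≠ j ∧ x i * g * (x i)⁻¹ = x j * g * (x j)⁻¹} := by
    ext g
    simp only [Fset, Set.mem_setOf_eq, Set.mem_iInter, Set.mem_iUnion]
  rw [this]
  refine isClosed_iInter fun x => isClosed_iUnion_of_finite fun i =>
    isClosed_iUnion_of_finite fun j => ?_
  by_cases hij : i = j
  · simp [hij]
  · have : {g : G | i ≠ j ∧ x i * g * (x i)⁻¹ = x j * g * (x j)⁻¹}
        = {g : G | x i * g * (x i)⁻¹ = x j * g * (x j)⁻¹} := by
      ext g; simp [hij]
    rw [this]
    exact isClosed_eq (by fun_prop) (by fun_prop)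

lemma centralizer_closed [T2Space G] (g : G) :
    IsClosed ((Subgroup.centralizer {g} : Subgroup G) : Set G) := by
  have : ((Subgroup.centralizer {g} : Subgroup G) : Set G)
      = (fun x : G => x * g * x⁻¹) ⁻¹' {g} := by
    ext x
    simp only [SetLike.mem_coe, Subgroup.mem_centralizer_singleton_iff, Set.mem_preimage,
      Set.mem_singleton_iff]
    exact comm_iff_conj
  rw [this]
  exact isClosed_singleton.preimage (by fun_prop)

lemma centralizer_open [T2Space G] {g : G} (h : (conjSet g).Finite) :
    IsOpen ((Subgroup.centralizer {g} : Subgroup G) : Set G) := by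
  have key : ((Subgroup.centralizer {g} : Subgroup G) : Set G)
      = ((fun x : G => x * g * x⁻¹) ⁻¹' (conjSet g \ {g}))ᶜ := by
    ext x
    simp only [SetLike.mem_coe, Subgroup.mem_centralizer_singleton_iff, Set.mem_compl_iff,
      Set.mem_preimage, Set.mem_diff, Set.mem_singleton_iff, not_and, not_not]
    constructor
    · intro h _; exact comm_iff_conj.mp h
    · intro h'
      exact comm_iff_conj.mpr (h' ⟨x, rfl⟩)
  rw [key]
  exact ((h.diff (t := {g})).isClosed.preimage (by fun_prop)).isOpen_compl

end Top

section Main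

variable {G : Type*} [Group G] [TopologicalSpace G] [IsTopologicalGroup G]
  [CompactSpace G] [T2Space G]

lemma center_isOpen (hFC : ∀ g : G, (conjSet g).Finite) :
    IsOpen ((Subgroup.center G : Subgroup G) : Set G) := by
  classical
  -- Baire category: some `Fset G n` has nonempty interior
  have hcov : (⋃ n, Fset G n) = Set.univ := by
    rw [Set.eq_univ_iff_forall]
    exact fun g => Set.mem_iUnion.mpr ⟨_, mem_Fset_card (hFC g)⟩
  obtain ⟨n, g₁, hg₁⟩ := nonempty_interior_of_iUnion_of_closed
    (fun n => isClosed_Fset (G := G) n) hcov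
  set U := interior (Fset G n) with hUdef
  have hUopen : IsOpen U := isOpen_interior
  have hUsub : U ⊆ Fset G n := interior_subset
  set mf : G → ℕ := fun g => (hFC g).toFinset.card with hmf
  have hbdd : ∀ g ∈ U, mf g ≤ n := fun g hg => card_le_of_mem_Fset (hFC g) (hUsub hg)
  -- element of maximal class size in U
  have hSne : (mf '' U).Nonempty := ⟨mf g₁, ⟨g₁, hg₁, rfl⟩⟩
  have hSbdd : BddAbove (mf '' U) := ⟨n, by rintro _ ⟨g, hg, rfl⟩; exact hbdd g hg⟩
  obtain ⟨g₀, hg₀U, hval⟩ := Nat.sSup_mem hSne hSbdd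
  have hg₀max : ∀ g ∈ U, mf g ≤ mf g₀ := by
    intro g hg
    rw [hval]
    exact le_csSup hSbdd ⟨g, hg, rfl⟩
  set m₀ := mf g₀ with hm₀
  set s₀ := (hFC g₀).toFinset with hs₀
  -- choose conjugators for each element of the class of g₀, with `1` for g₀ itself
  have hchoice : ∀ y : s₀, ∃ c : G, c * g₀ * c⁻¹ = (y : G) ∧ ((y : G) = g₀ → c = 1) := by
    intro y
    by_cases hy : (y : G) = g₀
    · exact ⟨1, by simp [hy], fun _ => rfl⟩
    · have hmem : (y : G) ∈ conjSet g₀ := (Set.Finite.mem_toFinset _).mp y.2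
      obtain ⟨c, hcc⟩ := hmem
      exact ⟨c, hcc, fun h => absurd h hy⟩
  choose c hc hc1 using hchoice
  have e : Fin m₀ ≃ s₀ := s₀.equivFin.symm
  set x : Fin m₀ → G := fun i => c (e i) with hx
  have hxconj : ∀ i, x i * g₀ * (x i)⁻¹ = ((e i : G)) := fun i => hc (e i)
  have hxinj : Function.Injective fun i => x i * g₀ * (x i)⁻¹ := by
    intro i j h
    have h' : ((e i : G)) = ((e j : G)) := by
      rw [← hxconj i, ← hxconj j]; exact h
    exact e.injective (Subtype.val_injective h')
  have hg₀mem : g₀ ∈ s₀ := (Set.Finite.mem_toFinset _).mpr ⟨1, by group⟩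
  set i₀ := e.symm ⟨g₀, hg₀mem⟩ with hi₀
  have hei₀ : ((e i₀ : G)) = g₀ := by rw [hi₀, e.apply_symm_apply]
  have hxi₀ : x i₀ = 1 := hc1 (e i₀) hei₀
  -- the centralizer of g₀
  set K := Subgroup.centralizer ({g₀} : Set G) with hKdef
  have hKcl : IsClosed (K : Set G) := centralizer_closed g₀
  have hKcomp : IsCompact (K : Set G) := hKcl.isCompact
  -- bad set in G × G and the tube lemma
  set B : Set (G × G) := ⋃ i ∈ {i : Fin m₀ | i ≠ i₀},
    {p : G × G | p.1 * p.2 * p.1⁻¹ = x i * p.2 * (x i)⁻¹} with hBdef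
  have hBclosed : IsClosed B :=
    Set.Finite.isClosed_biUnion (Set.toFinite _)
      (fun i _ => isClosed_eq (by fun_prop) (by fun_prop))
  have hsubB : (K : Set G) ×ˢ ({g₀} : Set G) ⊆ Bᶜ := by
    rintro ⟨y, h'⟩ ⟨hy, hh⟩
    have hh2 : h' = g₀ := hh
    intro hmem
    simp only [hBdef, Set.mem_iUnion, Set.mem_setOf_eq] at hmem
    obtain ⟨i, hne, heq⟩ := hmem
    rw [hh2] at heq
    have hyg : y * g₀ * y⁻¹ = g₀ :=
      comm_iff_conj.mp (Subgroup.mem_centralizer_singleton_iff.mp hy)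
    rw [hyg, hxconj i] at heq
    have hei : e i = ⟨g₀, hg₀mem⟩ := Subtype.val_injective heq.symm
    exact hne ((Equiv.eq_symm_apply e).mpr hei)
  obtain ⟨u, v, huo, hvo, hKu, hg₀v, huv⟩ :=
    generalized_tube_lemma hKcomp isCompact_singleton hBclosed.isOpen_compl hsubB
  -- injectivity neighborhood
  set Bad : Set G := ⋃ i, ⋃ j,
    {h : G | i ≠ j ∧ x i * h * (x i)⁻¹ = x j * h * (x j)⁻¹} with hBaddef
  have hBadcl : IsClosed Bad := by
    refine isClosed_iUnion_of_finite fun i => isClosed_iUnion_of_finite fun j => ?_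
    by_cases hij : i = j
    · simp [hij]
    · have : {h : G | i ≠ j ∧ x i * h * (x i)⁻¹ = x j * h * (x j)⁻¹}
          = {h : G | x i * h * (x i)⁻¹ = x j * h * (x j)⁻¹} := by
        ext h; simp [hij]
      rw [this]
      exact isClosed_eq (by fun_prop) (by fun_prop)
  have hg₀Bad : g₀ ∉ Bad := by
    simp only [hBaddef, Set.mem_iUnion, Set.mem_setOf_eq]
    rintro ⟨i, j, hij, heq⟩
    exact hij (hxinj heq)
  -- the good neighborhood of g₀
  set V := (U ∩ v) ∩ Badᶜ with hVdef
  have hVopen : IsOpen V := ((hUopen.inter hvo).inter hBadcl.isOpen_compl)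
  have hg₀V : g₀ ∈ V := ⟨⟨hg₀U, hg₀v rfl⟩, hg₀Bad⟩
  -- every element of V commutes with every element of K
  have hkey : ∀ h ∈ V, ∀ y ∈ K, y * h = h * y := by
    rintro h ⟨⟨hhU, hhv⟩, hhBad⟩ y hy
    have hinj : Function.Injective fun i => x i * h * (x i)⁻¹ := by
      intro i j hij
      by_contra hne
      exact hhBad (Set.mem_iUnion.mpr ⟨i, Set.mem_iUnion.mpr ⟨j, ⟨hne, hij⟩⟩⟩)
    have hhF : h ∈ Fset G m₀ := Fset_mono (hg₀max h hhU) (mem_Fset_card (hFC h))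
    obtain ⟨i, hi⟩ := covering_of_mem_Fset hhF x hinj y
    have hii₀ : i = i₀ := by
      by_contra hne
      have hyu : (y, h) ∈ u ×ˢ v := ⟨hKu hy, hhv⟩
      exact (huv hyu) (Set.mem_iUnion.mpr ⟨i, Set.mem_iUnion.mpr ⟨hne, hi⟩⟩)
    rw [hii₀, hxi₀] at hi
    simp only [one_mul, inv_one, mul_one] at hi
    exact comm_iff_conj.mpr hi
  -- centralizer of K is open
  set D := Subgroup.centralizer (K : Set G) with hDdef
  have hVD : V ⊆ (D : Set G) := fun h hh =>
    Subgroup.mem_centralizer_iff.mpr (fun y hy => hkey h hh y hy)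
  have hDopen : IsOpen (D : Set G) :=
    Subgroup.isOpen_of_mem_nhds D (Filter.mem_of_superset (hVopen.mem_nhds hg₀V) hVD)
  set A := K ⊓ D with hAdef
  have hAopen : IsOpen (A : Set G) := by
    rw [hAdef, Subgroup.coe_inf]
    exact (centralizer_open (hFC g₀)).inter hDopen
  have hAfin : Finite (G ⧸ A) := A.quotient_finite_of_isOpen hAopen
  set Z' := A ⊓ ⨅ q : G ⧸ A, Subgroup.centralizer {(Quotient.out q : G)} with hZ'def
  have hZ'open : IsOpen (Z' : Set G) := by
    rw [hZ'def, Subgroup.coe_inf, Subgroup.coe_iInf]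
    exact hAopen.inter (isOpen_iInter_of_finite fun q => centralizer_open (hFC _))
  have hZ'le : Z' ≤ Subgroup.center G := by
    intro z hz
    rw [hZ'def, Subgroup.mem_inf] at hz
    obtain ⟨hzA, hzC⟩ := hz
    rw [Subgroup.mem_center_iff]
    intro g
    set q : G ⧸ A := QuotientGroup.mk g with hq
    have hqout : (Quotient.out q : G)⁻¹ * g ∈ A := by
      rw [← QuotientGroup.eq]
      rw [hq, QuotientGroup.out_eq']
    have h1 : Quotient.out q * z = z * Quotient.out q :=
      (Subgroup.mem_centralizer_singleton_iff.mp (Subgroup.mem_iInf.mp hzC q)).symm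
    have h2 : ((Quotient.out q : G)⁻¹ * g) * z = z * ((Quotient.out q : G)⁻¹ * g) := by
      have hzK : z ∈ K := hzA.1
      have haD : ((Quotient.out q : G)⁻¹ * g) ∈ D := hqout.2
      exact (Subgroup.mem_centralizer_iff.mp haD z hzK).symm
    calc g * z = Quotient.out q * (((Quotient.out q : G)⁻¹ * g) * z) := by group
      _ = Quotient.out q * (z * ((Quotient.out q : G)⁻¹ * g)) := by rw [h2]
      _ = (Quotient.out q * z) * ((Quotient.out q : G)⁻¹ * g) := by group
      _ = z * g := by rw [h1]; group
  exact Subgroup.isOpen_of_mem_nhds _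
    (Filter.mem_of_superset (hZ'open.mem_nhds Z'.one_mem) hZ'le)

lemma fc_of_finite_quotient (h : Finite (G ⧸ Subgroup.center G)) (g : G) :
    (conjSet g).Finite := by
  have hsub : conjSet g ⊆ Set.range
      (fun q : G ⧸ Subgroup.center G => Quotient.out q * g * (Quotient.out q)⁻¹) := by
    rintro y ⟨cc, rfl⟩
    refine ⟨QuotientGroup.mk cc, ?_⟩
    set q : G ⧸ Subgroup.center G := QuotientGroup.mk cc with hq
    have hz : (Quotient.out q : G)⁻¹ * cc ∈ Subgroup.center G := by
      rw [← QuotientGroup.eq, hq, QuotientGroup.out_eq']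
    set z := (Quotient.out q : G)⁻¹ * cc with hzdef
    have hcc : cc = Quotient.out q * z := by rw [hzdef]; group
    have hzg : z * g = g * z := (Subgroup.mem_center_iff.mp hz g).symm
    have hzgz : z * g * z⁻¹ = g := comm_iff_conj.mp hzg
    show Quotient.out q * g * (Quotient.out q)⁻¹ = cc * g * cc⁻¹
    rw [hcc]
    calc Quotient.out q * g * (Quotient.out q)⁻¹
        = Quotient.out q * (z * g * z⁻¹) * (Quotient.out q)⁻¹ := by rw [hzgz]
      _ = (Quotient.out q * z) * g * (Quotient.out q * z)⁻¹ := by group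
  exact (Set.finite_range _).subset hsub

end Main

/-- A compact topological group is an FC-group (every conjugacy class is finite) iff its
center is open, equivalently iff `G/Z(G)` is finite. -/
theorem compact_fc_iff_center_open {G : Type*} [Group G] [TopologicalSpace G]
    [IsTopologicalGroup G] [CompactSpace G] [T2Space G] :
    ((∀ g : G, {y : G | IsConj g y}.Finite) ↔
      IsOpen ((Subgroup.center G : Subgroup G) : Set G)) ∧
    ((∀ g : G, {y : G | IsConj g y}.Finite) ↔ Finite (G ⧸ Subgroup.center G)) := by
  have hfc : (∀ g : G, {y : G | IsConj g y}.Finite) ↔ (∀ g : G, (conjSet g).Finite) := by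
    constructor <;> intro h g <;> [rw [← conjClass_eq]; rw [conjClass_eq]] <;> exact h g
  have h1 : (∀ g : G, (conjSet g).Finite) → IsOpen ((Subgroup.center G : Subgroup G) : Set G) :=
    center_isOpen
  have h2 : IsOpen ((Subgroup.center G : Subgroup G) : Set G) →
      Finite (G ⧸ Subgroup.center G) :=
    fun h => (Subgroup.center G).quotient_finite_of_isOpen h
  have h3 : Finite (G ⧸ Subgroup.center G) → (∀ g : G, (conjSet g).Finite) :=
    fun h g => fc_of_finite_quotient h g
  constructor
  · exact ⟨fun h => h1 (hfc.mp h), fun h => hfc.mpr (h3 (h2 h))⟩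
  · exact ⟨fun h => h2 (h1 (hfc.mp h)), fun h => hfc.mpr (h3 h)⟩
end

section
/- Let G be a compact Lie group and g ∈ G. The power map p_n is constant (equal to 1) on the whole connected component gG₀ if and only if gⁿ = 1 and every eigenvalue of Ad(g) is an n-th root of unity different from 1. -/
set_option linter.unusedSectionVars false
open scoped Manifold
open Filter Set Topology

section Aux

variable {E : Type*} [NormedAddCommGroup E] [NormedSpace ℝ E]
    [FiniteDimensional ℝ E] {G : Type*} [TopologicalSpace G] [ChartedSpace E G]
    [Group G] [IsTopologicalGroup G] [LieGroup 𝓘(ℝ, E) (⊤ : ℕ∞) G]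

/-- The manifold derivative of a self-map of `G`, as a continuous linear endomorphism of `E`. -/
noncomputable def mfd (f : G → G) (x : G) : E →L[ℝ] E :=
  mfderiv 𝓘(ℝ, E) 𝓘(ℝ, E) f x

lemma mfd_comp {f h : G → G} {x y : G} (hy : h x = y)
    (hf : MDifferentiableAt 𝓘(ℝ, E) 𝓘(ℝ, E) f y)
    (hh : MDifferentiableAt 𝓘(ℝ, E) 𝓘(ℝ, E) h x) :
    mfd (E := E) (f ∘ h) x = (mfd f y).comp (mfd h x) := by
  subst hy
  exact mfderiv_comp x hf hh

lemma mfd_id (x : G) : mfd (E := E) (fun z : G => z) x = ContinuousLinearMap.id ℝ E :=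
  mfderiv_id

lemma mfd_const (a x : G) : mfd (E := E) (fun _ : G => a) x = 0 :=
  mfderiv_const

lemma mfderiv_mul_pt (p q : G) (hp : p = 1) (hq : q = 1) :
    mfderiv (𝓘(ℝ, E).prod 𝓘(ℝ, E)) 𝓘(ℝ, E) (fun z : G × G => z.1 * z.2) (p, q) =
      (ContinuousLinearMap.fst ℝ E E) + (ContinuousLinearMap.snd ℝ E E) := by
  subst hp; subst hq
  have hmul : MDifferentiableAt (𝓘(ℝ, E).prod 𝓘(ℝ, E)) 𝓘(ℝ, E)
      (fun p : G × G => p.1 * p.2) ((1 : G), (1 : G)) :=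
    ((contMDiff_mul (I := 𝓘(ℝ, E)) (n := ((⊤ : ℕ∞) : WithTop ℕ∞)) (G := G)).mdifferentiable (by simp)) _
  have hcalc := mfderiv_prod_eq_add_comp (I := 𝓘(ℝ, E)) (I' := 𝓘(ℝ, E)) (I'' := 𝓘(ℝ, E))
      (f := fun p : G × G => p.1 * p.2) (p := ((1 : G), (1 : G))) hmul
  rw [show (fun z : G => z * (1 : G)) = (fun z : G => z) from funext fun z => mul_one z,
    show (fun z : G => (1 : G) * z) = (fun z : G => z) from funext fun z => one_mul z] at hcalc
  have hid : mfderiv 𝓘(ℝ, E) 𝓘(ℝ, E) (fun z : G => z) 1 = ContinuousLinearMap.id ℝ E :=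
    mfderiv_id
  rw [hid] at hcalc
  rw [hcalc]
  ext v
  · rfl

lemma mfd_mul {f h : G → G}
    (hf : MDifferentiableAt 𝓘(ℝ, E) 𝓘(ℝ, E) f 1)
    (hh : MDifferentiableAt 𝓘(ℝ, E) 𝓘(ℝ, E) h 1)
    (hf1 : f 1 = 1) (hh1 : h 1 = 1) :
    mfd (E := E) (fun x => f x * h x) 1 = mfd f 1 + mfd h 1 := by
  have hmul' : MDifferentiableAt (𝓘(ℝ, E).prod 𝓘(ℝ, E)) 𝓘(ℝ, E)
      (fun p : G × G => p.1 * p.2) ((f 1 : G), (h 1 : G)) := by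
    rw [hf1, hh1]
    exact ((contMDiff_mul (I := 𝓘(ℝ, E)) (n := ((⊤ : ℕ∞) : WithTop ℕ∞)) (G := G)).mdifferentiable (by simp)) _
  have hpr : MDifferentiableAt 𝓘(ℝ, E) (𝓘(ℝ, E).prod 𝓘(ℝ, E))
      (fun x : G => (f x, h x)) 1 := by exact hf.prodMk hh
  have hcomp : mfd (E := E) (fun x => f x * h x) 1 =
      (mfderiv (𝓘(ℝ, E).prod 𝓘(ℝ, E)) 𝓘(ℝ, E) (fun p : G × G => p.1 * p.2)
        ((f 1 : G), (h 1 : G))).comp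
      (mfderiv 𝓘(ℝ, E) (𝓘(ℝ, E).prod 𝓘(ℝ, E)) (fun x : G => (f x, h x)) 1) := by
    exact mfderiv_comp 1 hmul' hpr
  have hprod : mfderiv 𝓘(ℝ, E) (𝓘(ℝ, E).prod 𝓘(ℝ, E)) (fun x : G => (f x, h x)) 1 =
      (mfderiv 𝓘(ℝ, E) 𝓘(ℝ, E) f 1).prod (mfderiv 𝓘(ℝ, E) 𝓘(ℝ, E) h 1) :=
    hf.mfderiv_prod hh
  rw [hcomp, hprod, mfderiv_mul_pt (f 1) (h 1) hf1 hh1]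
  ext v
  · rfl

/-- Conjugation map. -/
def conjMap (g : G) : G → G := fun x => g * x * g⁻¹

lemma contMDiff_conjMap (g : G) : ContMDiff 𝓘(ℝ, E) 𝓘(ℝ, E) (⊤ : ℕ∞) (conjMap g) :=
  (contMDiff_mul_right (a := g⁻¹)).comp (contMDiff_mul_left (a := g))

lemma conjMap_one (g : G) : conjMap g 1 = 1 := by
  simp [conjMap]

/-- The adjoint map. -/
noncomputable def AdL (g : G) : E →L[ℝ] E := mfd (conjMap g) 1

lemma conjMap_comp (g h : G) :
    conjMap (g * h) = conjMap g ∘ conjMap h := by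
  funext x
  simp [conjMap, mul_inv_rev, mul_assoc]

lemma AdL_mul (g h : G) : AdL (E := E) (g * h) = (AdL g).comp (AdL h) := by
  rw [AdL, conjMap_comp]
  rw [mfd_comp (conjMap_one h) (((contMDiff_conjMap g).mdifferentiable (by simp)) _)
    (((contMDiff_conjMap h).mdifferentiable (by simp)) _)]
  rfl

lemma AdL_one : AdL (E := E) (1 : G) = ContinuousLinearMap.id ℝ E := by
  have : conjMap (1 : G) = fun z : G => z := by
    funext x; simp [conjMap]
  rw [AdL, this]
  exact mfd_id 1

lemma AdL_pow (g : G) (k : ℕ) : AdL (E := E) (g ^ k) = (AdL g) ^ k := by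
  induction k with
  | zero => rw [pow_zero, pow_zero]; exact AdL_one (G := G)
  | succ m ih =>
    rw [pow_succ, AdL_mul, ih, pow_succ]
    rfl

lemma AdL_inv_comp (g : G) : (AdL (E := E) g⁻¹).comp (AdL g) = ContinuousLinearMap.id ℝ E := by
  rw [← AdL_mul, inv_mul_cancel]
  exact AdL_one

lemma mfd_inv_one : mfd (E := E) (fun x : G => x⁻¹) 1 = - ContinuousLinearMap.id ℝ E := by
  have h0 : mfd (E := E) (fun x : G => x * x⁻¹) 1 = 0 := by
    have : (fun x : G => x * x⁻¹) = fun _ : G => (1 : G) := funext fun x => mul_inv_cancel x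
    rw [this]
    exact mfd_const 1 1
  have h1 : mfd (E := E) (fun x : G => x * x⁻¹) 1 =
      mfd (fun x : G => x) 1 + mfd (fun x : G => x⁻¹) 1 :=
    mfd_mul (mdifferentiableAt_id) (((contMDiff_inv 𝓘(ℝ, E) ((⊤ : ℕ∞) : WithTop ℕ∞)).mdifferentiable (by simp)) _)
      rfl inv_one
  rw [h0, mfd_id] at h1
  have := eq_neg_of_add_eq_zero_right h1.symm
  rw [this]

lemma map_nhds_eq_of_mfd_surj {f : G → G} (hf : ContMDiff 𝓘(ℝ, E) 𝓘(ℝ, E) (⊤ : ℕ∞) f) {x : G}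
    (h : LinearMap.range (mfd (E := E) f x : E →ₗ[ℝ] E) = ⊤) :
    Filter.map f (𝓝 x) = 𝓝 (f x) := by
  have hrange : Set.range (𝓘(ℝ, E) : ModelWithCorners ℝ E E) = univ := by
    simp
  set e := extChartAt 𝓘(ℝ, E) x with he
  set e' := extChartAt 𝓘(ℝ, E) (f x) with he'
  set F : E → E := ↑e' ∘ f ∘ ↑e.symm with hF
  set a : E := e x with ha
  -- smoothness of the chart representative
  have hFc : ContDiffAt ℝ ((⊤ : ℕ∞) : WithTop ℕ∞) F a := by
    have h2 := (contMDiffAt_iff.1 (hf x)).2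
    rw [hrange, contDiffWithinAt_univ] at h2
    exact h2
  -- the manifold derivative is the usual derivative of the representative
  have hmf : mfd (E := E) f x = fderiv ℝ F a := by
    rw [mfd, ((hf x).mdifferentiableAt (by simp)).mfderiv, hrange, fderivWithin_univ]
    rfl
  have hstrict : HasStrictFDerivAt F (fderiv ℝ F a) a :=
    hFc.hasStrictFDerivAt (by simp)
  have hsurj : LinearMap.range (fderiv ℝ F a : E →ₗ[ℝ] E) = ⊤ := by
    rw [← hmf]; exact h
  have hmapF : Filter.map F (𝓝 a) = 𝓝 (F a) :=
    hstrict.map_nhds_eq_of_surj hsurj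
  have hcont : ContinuousAt f x := (hf x).continuousAt
  -- chart facts
  have hxe : x ∈ e.source := mem_extChartAt_source x
  have hfxe : f x ∈ e'.source := mem_extChartAt_source (f x)
  have hmape : Filter.map e (𝓝 x) = 𝓝 a := by
    have := map_extChartAt_nhds (I := 𝓘(ℝ, E)) x
    rwa [hrange, nhdsWithin_univ] at this
  have hmape' : Filter.map e'.symm (𝓝 (e' (f x))) = 𝓝 (f x) := by
    have := map_extChartAt_symm_nhdsWithin_range (I := 𝓘(ℝ, E)) (f x)
    rwa [hrange, nhdsWithin_univ] at this
  have hFa : F a = e' (f x) := by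
    simp only [hF, Function.comp_apply, ha]
    rw [extChartAt_to_inv]
  -- first: map (e' ∘ f) (𝓝 x) = 𝓝 (e' (f x))
  have key : Filter.map (↑e' ∘ f) (𝓝 x) = 𝓝 (e' (f x)) := by
    have hev : (F ∘ ↑e) =ᶠ[𝓝 x] (↑e' ∘ f) := by
      filter_upwards [extChartAt_source_mem_nhds (I := 𝓘(ℝ, E)) x] with y hy
      simp only [hF, Function.comp_apply]
      rw [PartialEquiv.left_inv _ hy]
    calc Filter.map (↑e' ∘ f) (𝓝 x) = Filter.map (F ∘ ↑e) (𝓝 x) := (Filter.map_congr hev).symm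
      _ = Filter.map F (Filter.map (↑e) (𝓝 x)) := by rw [Filter.map_map]
      _ = Filter.map F (𝓝 a) := by rw [hmape]
      _ = 𝓝 (F a) := hmapF
      _ = 𝓝 (e' (f x)) := by rw [hFa]
  -- now remove the chart e'
  have hev2 : (↑e'.symm ∘ (↑e' ∘ f)) =ᶠ[𝓝 x] f := by
    have hs : f ⁻¹' e'.source ∈ 𝓝 x := hcont.preimage_mem_nhds (extChartAt_source_mem_nhds _)
    filter_upwards [hs] with y hy
    simp only [Function.comp_apply]
    exact PartialEquiv.left_inv _ hy
  calc Filter.map f (𝓝 x) = Filter.map (↑e'.symm ∘ (↑e' ∘ f)) (𝓝 x) :=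
        (Filter.map_congr hev2).symm
    _ = Filter.map (↑e'.symm) (Filter.map (↑e' ∘ f) (𝓝 x)) := by rw [Filter.map_map]
    _ = Filter.map (↑e'.symm) (𝓝 (e' (f x))) := by rw [key]
    _ = 𝓝 (f x) := hmape'

/-- Auxiliary ordered product of conjugates. -/
def Qfun (g : G) : ℕ → G → G
  | 0 => fun _ => 1
  | (m+1) => fun x => Qfun g m x * (g ^ (m+1) * x * (g ^ (m+1))⁻¹)

lemma Qfun_one (g : G) (m : ℕ) : Qfun g m 1 = 1 := by
  induction m with
  | zero => rfl
  | succ k ih => simp [Qfun, ih]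

lemma Qfun_spec (g x : G) (m : ℕ) : (g * x) ^ m = Qfun g m x * g ^ m := by
  induction m with
  | zero => simp [Qfun]
  | succ k ih =>
    rw [pow_succ, ih]
    show Qfun g k x * g ^ k * (g * x) = Qfun g k x * (g ^ (k+1) * x * (g ^ (k+1))⁻¹) * g ^ (k+1)
    group

lemma contMDiff_Qfun (g : G) (m : ℕ) : ContMDiff 𝓘(ℝ, E) 𝓘(ℝ, E) (⊤ : ℕ∞) (Qfun g m) := by
  induction m with
  | zero => exact contMDiff_const
  | succ k ih => exact ih.mul (contMDiff_conjMap (g ^ (k+1)))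

lemma mfd_Qfun (g : G) (m : ℕ) :
    mfd (E := E) (Qfun g m) 1 = ∑ k ∈ Finset.range m, (AdL (E := E) g) ^ (k + 1) := by
  induction m with
  | zero =>
    rw [show Qfun g 0 = (fun _ : G => (1 : G)) from rfl, mfd_const]
    simp
  | succ k ih =>
    have hstep : mfd (E := E) (Qfun g (k+1)) 1 = mfd (Qfun g k) 1 + AdL (g ^ (k+1)) := by
      rw [show Qfun g (k+1) = (fun x : G => Qfun g k x * conjMap (g ^ (k+1)) x) from rfl]
      exact mfd_mul ((contMDiff_Qfun g k).mdifferentiable (by simp) _)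
        ((contMDiff_conjMap (g ^ (k+1))).mdifferentiable (by simp) _)
        (Qfun_one g k) (conjMap_one (g ^ (k+1)))
    rw [hstep, ih, AdL_pow, Finset.sum_range_succ]

end Aux

/-- For a compact Lie group `G` and `g ∈ G`, the power map `p_n(x) = xⁿ` is constant equal
to `1` on the whole connected component `g G₀` if and only if `gⁿ = 1` and every eigenvalue
of `Ad(g)` (the differential at `1` of conjugation by `g`) on the complexified Lie algebra
is an `n`-th root of unity different from `1`. -/
theorem power_map_totally_singular_iff {E : Type*} [NormedAddCommGroup E] [NormedSpace ℝ E]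
    [FiniteDimensional ℝ E] {G : Type*} [TopologicalSpace G] [ChartedSpace E G]
    [Group G] [IsTopologicalGroup G] [LieGroup 𝓘(ℝ, E) (⊤ : ℕ∞) G] [CompactSpace G] [T2Space G]
    (n : ℕ) (hn : 1 ≤ n) (g : G) :
    (∀ x ∈ connectedComponent g, x ^ n = 1) ↔
      (g ^ n = 1 ∧
        ∀ μ : ℂ,
          Module.End.HasEigenvalue
            (LinearMap.baseChange ℂ
              (ContinuousLinearMap.toLinearMap
                (show E →L[ℝ] E from
                  mfderiv 𝓘(ℝ, E) 𝓘(ℝ, E) (fun x : G => g * x * g⁻¹) (1 : G)))) μ →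
          μ ^ n = 1 ∧ μ ≠ 1) := by
  have hAd : (show E →L[ℝ] E from
      mfderiv 𝓘(ℝ, E) 𝓘(ℝ, E) (fun x : G => g * x * g⁻¹) (1 : G)) = AdL (E := E) g := rfl
  rw [hAd]
  constructor
  · intro hcc
    have hgcc : g ∈ connectedComponent g := mem_connectedComponent
    have hgn : g ^ n = 1 := hcc g hgcc
    refine ⟨hgn, ?_⟩
    haveI : LocallyConnectedSpace G := ChartedSpace.locallyConnectedSpace E G
    have hopen : IsOpen (connectedComponent g) := isOpen_connectedComponent
    have hq0 : mfd (E := E) (fun x : G => (g * x) ^ n) 1 = 0 := by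
      have hev : (fun x : G => (g * x) ^ n) =ᶠ[𝓝 (1 : G)] (fun _ => (1 : G)) := by
        have hU : {x : G | g * x ∈ connectedComponent g} ∈ 𝓝 (1 : G) := by
          have hc : Continuous fun x : G => g * x := continuous_mul_left g
          have hg1 : g * 1 ∈ connectedComponent g := by rwa [mul_one]
          exact hc.continuousAt.preimage_mem_nhds (hopen.mem_nhds hg1)
        filter_upwards [hU] with x hx
        exact hcc _ hx
      have h2 : mfd (E := E) (fun x : G => (g * x) ^ n) 1
          = mfd (fun _ : G => (1 : G)) 1 := hev.mfderiv_eq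
      rw [h2, mfd_const]
    have hfun : (fun x : G => (g * x) ^ n) = Qfun g n := by
      funext x; rw [Qfun_spec, hgn, mul_one]
    have hsum1 : (∑ k ∈ Finset.range n, (AdL (E := E) g) ^ (k + 1)) = 0 := by
      rw [← mfd_Qfun, ← hfun, hq0]
    have hsum : (∑ k ∈ Finset.range n, (AdL (E := E) g) ^ k) = 0 := by
      have h2 : AdL (E := E) g * (∑ k ∈ Finset.range n, (AdL (E := E) g) ^ k) = 0 := by
        rw [Finset.mul_sum, ← hsum1]
        exact Finset.sum_congr rfl fun k _ => (pow_succ' (AdL (E := E) g) k).symm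
      have h3 : (AdL (E := E) g⁻¹) * (AdL (E := E) g *
          (∑ k ∈ Finset.range n, (AdL (E := E) g) ^ k)) = 0 := by rw [h2, mul_zero]
      rwa [← mul_assoc, show (AdL (E := E) g⁻¹) * AdL (E := E) g = 1 from AdL_inv_comp g,
        one_mul] at h3
    intro μ hμ
    have hBsum : (∑ k ∈ Finset.range n,
        (ContinuousLinearMap.toLinearMap (AdL (E := E) g)) ^ k) = 0 := by
      ext v
      have h4 := congrArg (fun T : E →L[ℝ] E => T v) hsum
      simp only [ContinuousLinearMap.zero_apply] at h4
      have h6 : (∑ k ∈ Finset.range n,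
          (ContinuousLinearMap.toLinearMap (AdL (E := E) g)) ^ k) v
          = (∑ k ∈ Finset.range n, (AdL (E := E) g) ^ k) v := by
        rw [LinearMap.sum_apply, ContinuousLinearMap.sum_apply]
        refine Finset.sum_congr rfl fun k _ => ?_
        rw [Module.End.pow_apply, FunLike.coe_pow_eq_iterate]
        rfl
      rw [h6, hsum]
      rfl
    set Bc := LinearMap.baseChange ℂ (ContinuousLinearMap.toLinearMap (AdL (E := E) g)) with hBc
    have hAsum : (∑ k ∈ Finset.range n, Bc ^ k) = 0 := by
      have hc1 : (∑ k ∈ Finset.range n, Bc ^ k)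
          = ∑ k ∈ Finset.range n, LinearMap.baseChange ℂ
              ((ContinuousLinearMap.toLinearMap (AdL (E := E) g)) ^ k) := by
        refine Finset.sum_congr rfl fun k _ => ?_
        rw [hBc, LinearMap.baseChange_pow]
      have hc2 : (∑ k ∈ Finset.range n, LinearMap.baseChange ℂ
              ((ContinuousLinearMap.toLinearMap (AdL (E := E) g)) ^ k))
          = LinearMap.baseChange ℂ (∑ k ∈ Finset.range n,
              (ContinuousLinearMap.toLinearMap (AdL (E := E) g)) ^ k) := by
        have hms := map_sum (LinearMap.baseChangeHom ℝ ℂ E E)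
          (fun k => (ContinuousLinearMap.toLinearMap (AdL (E := E) g)) ^ k) (Finset.range n)
        simp only [LinearMap.baseChangeHom_apply] at hms
        exact hms.symm
      rw [hc1, hc2, hBsum, LinearMap.baseChange_zero]
    obtain ⟨v, hv⟩ := hμ.exists_hasEigenvector
    have hvz : (∑ k ∈ Finset.range n, μ ^ k) • v = 0 := by
      calc (∑ k ∈ Finset.range n, μ ^ k) • v
          = ∑ k ∈ Finset.range n, μ ^ k • v := Finset.sum_smul
        _ = ∑ k ∈ Finset.range n, (Bc ^ k) v :=
            Finset.sum_congr rfl fun k _ => (hv.pow_apply k).symm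
        _ = (∑ k ∈ Finset.range n, Bc ^ k) v := (LinearMap.sum_apply _ _ _).symm
        _ = 0 := by rw [hAsum]; rfl
    have hgeo : (∑ k ∈ Finset.range n, μ ^ k) = 0 := by
      rcases smul_eq_zero.1 hvz with h | h
      · exact h
      · exact absurd h hv.2
    constructor
    · have hg2 := geom_sum_mul μ n
      rw [hgeo, zero_mul] at hg2
      exact (sub_eq_zero.1 hg2.symm)
    · rintro rfl
      simp only [one_pow, Finset.sum_const, Finset.card_range, nsmul_eq_mul, mul_one] at hgeo
      have : n = 0 := Nat.cast_eq_zero.1 hgeo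
      omega
  · rintro ⟨hgn, hμ⟩ x hx
    set Bc := LinearMap.baseChange ℂ (ContinuousLinearMap.toLinearMap (AdL (E := E) g)) with hBc
    -- `1` is not an eigenvalue of the complexified adjoint map
    have h1 : ¬ Module.End.HasEigenvalue Bc 1 := fun h => (hμ 1 h).2 rfl
    have hker : ∀ w : TensorProduct ℝ ℂ E, (Bc - 1 : Module.End ℂ (TensorProduct ℝ ℂ E)) w = 0 → w = 0 := by
      intro w hw
      by_contra hw0
      refine h1 (Module.End.hasEigenvalue_of_hasEigenvector
        ⟨Module.End.mem_eigenspace_iff.2 ?_, hw0⟩)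
      have hsub : Bc w - w = 0 := by
        simpa [LinearMap.sub_apply] using hw
      rw [one_smul]
      exact sub_eq_zero.1 hsub
    have hinj : Function.Injective (Bc - 1 : Module.End ℂ (TensorProduct ℝ ℂ E)) := by
      intro a b hab
      have hz : (Bc - 1 : Module.End ℂ (TensorProduct ℝ ℂ E)) (a - b) = 0 := by
        simp only [map_sub, hab, sub_self]
      exact sub_eq_zero.1 (hker _ hz)
    have hunit : IsUnit (Bc - 1 : Module.End ℂ (TensorProduct ℝ ℂ E)) :=
      (LinearMap.isUnit_iff_ker_eq_bot _).2 (LinearMap.ker_eq_bot.2 hinj)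
    have hdetC : LinearMap.det (Bc - 1 : Module.End ℂ (TensorProduct ℝ ℂ E)) ≠ 0 := by
      intro h0
      have := (Bc - 1 : Module.End ℂ (TensorProduct ℝ ℂ E)).isUnit_det hunit
      rw [h0] at this
      exact not_isUnit_zero this
    have hbc : (Bc - 1 : Module.End ℂ (TensorProduct ℝ ℂ E)) = LinearMap.baseChange ℂ
        (((ContinuousLinearMap.toLinearMap (AdL (E := E) g)) - 1 : Module.End ℝ E)) := by
      rw [LinearMap.baseChange_sub, LinearMap.baseChange_one, hBc]
    have hdetR : LinearMap.det (((ContinuousLinearMap.toLinearMap (AdL (E := E) g)) - 1 : Module.End ℝ E)) ≠ 0 := by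
      intro h0
      apply hdetC
      rw [hbc, LinearMap.det_baseChange, h0, map_zero]
    have hsurjR : Function.Surjective (((ContinuousLinearMap.toLinearMap (AdL (E := E) g)) - 1 : Module.End ℝ E)) := by
      have hco : ⇑(LinearMap.equivOfDetNeZero _ hdetR)
          = ⇑(((ContinuousLinearMap.toLinearMap (AdL (E := E) g)) - 1 : Module.End ℝ E)) := by
        rw [← LinearEquiv.coe_coe, LinearEquiv.coe_ofIsUnitDet]
      rw [← hco]
      exact (LinearMap.equivOfDetNeZero _ hdetR).surjective
    -- the conjugation-orbit map and its derivative at 1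
    have hψs : ContMDiff 𝓘(ℝ, E) 𝓘(ℝ, E) (⊤ : ℕ∞) (fun x : G => x * (g * x⁻¹ * g⁻¹)) := by
      exact contMDiff_id.mul ((contMDiff_conjMap g).comp (contMDiff_inv 𝓘(ℝ, E) ((⊤ : ℕ∞) : WithTop ℕ∞)))
    have hinner : mfd (E := E) (fun x : G => g * x⁻¹ * g⁻¹) 1 = -(AdL (E := E) g) := by
      have hco : (fun x : G => g * x⁻¹ * g⁻¹) = conjMap g ∘ (fun x : G => x⁻¹) := rfl
      rw [hco, mfd_comp inv_one (((contMDiff_conjMap g).mdifferentiable (by simp)) _)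
        (((contMDiff_inv 𝓘(ℝ, E) ((⊤ : ℕ∞) : WithTop ℕ∞)).mdifferentiable (by simp)) _), mfd_inv_one]
      ext v
      · simp [AdL]
    have hψd : mfd (E := E) (fun x : G => x * (g * x⁻¹ * g⁻¹)) 1
        = ContinuousLinearMap.id ℝ E - AdL (E := E) g := by
      have hm := mfd_mul (f := fun x : G => x) (h := fun x : G => g * x⁻¹ * g⁻¹)
        mdifferentiableAt_id (((contMDiff_conjMap g).comp
          (contMDiff_inv 𝓘(ℝ, E) ((⊤ : ℕ∞) : WithTop ℕ∞))).mdifferentiable (by simp) _) rfl (by simp)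
      rw [hm, mfd_id, hinner]
      ext v
      · simp [sub_eq_add_neg]
    have hcs : ContMDiff 𝓘(ℝ, E) 𝓘(ℝ, E) (⊤ : ℕ∞) (fun y : G => y * g * y⁻¹) := by
      exact (contMDiff_mul_right (a := g)).mul (contMDiff_inv 𝓘(ℝ, E) ((⊤ : ℕ∞) : WithTop ℕ∞))
    have hfact : (fun y : G => y * g * y⁻¹)
        = (fun y : G => y * g) ∘ (fun x : G => x * (g * x⁻¹ * g⁻¹)) := by
      funext y
      simp only [Function.comp_apply]
      group
    have hψ1 : (fun x : G => x * (g * x⁻¹ * g⁻¹)) 1 = 1 := by simp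
    have hcd : mfd (E := E) (fun y : G => y * g * y⁻¹) 1
        = (mfd (fun y : G => y * g) 1).comp (mfd (fun x : G => x * (g * x⁻¹ * g⁻¹)) 1) := by
      rw [hfact]
      exact mfd_comp hψ1 (mdifferentiableAt_mul_right) (hψs.mdifferentiable (by simp) _)
    -- right translation has surjective differential
    have hRsurj : Function.Surjective ⇑(mfd (E := E) (fun y : G => y * g) 1) := by
      have hidg : ((fun y : G => y * g) ∘ (fun y : G => y * g⁻¹)) = fun y : G => y := by
        funext y; simp
      have hcomp : mfd (E := E) ((fun y : G => y * g) ∘ (fun y : G => y * g⁻¹)) g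
          = (mfd (fun y : G => y * g) 1).comp (mfd (fun y : G => y * g⁻¹) g) :=
        mfd_comp (by simp) mdifferentiableAt_mul_right mdifferentiableAt_mul_right
      rw [hidg, mfd_id] at hcomp
      intro w
      refine ⟨(mfd (E := E) (fun y : G => y * g⁻¹) g) w, ?_⟩
      have := congrArg (fun T : E →L[ℝ] E => T w) hcomp
      simpa using this.symm
    have hψsurj : Function.Surjective ⇑(mfd (E := E) (fun x : G => x * (g * x⁻¹ * g⁻¹)) 1) := by
      rw [hψd]
      intro w
      obtain ⟨v, hv⟩ := hsurjR (-w)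
      refine ⟨v, ?_⟩
      have hv2 : (ContinuousLinearMap.toLinearMap (AdL (E := E) g)) v - v = -w := by
        simpa [LinearMap.sub_apply] using hv
      have hv3 : AdL (E := E) g v - v = -w := hv2
      simp only [ContinuousLinearMap.sub_apply, ContinuousLinearMap.id_apply]
      linear_combination (norm := abel) -hv3
    have hcsurj : LinearMap.range (mfd (E := E) (fun y : G => y * g * y⁻¹) 1 : E →ₗ[ℝ] E) = ⊤ := by
      rw [LinearMap.range_eq_top, hcd]
      exact hRsurj.comp hψsurj
    have hmap : Filter.map (fun y : G => y * g * y⁻¹) (𝓝 1) = 𝓝 ((1 : G) * g * 1⁻¹) :=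
      map_nhds_eq_of_mfd_surj hcs hcsurj
    rw [show (1 : G) * g * 1⁻¹ = g by simp] at hmap
    -- the conjugacy orbit of g
    set O := Set.range (fun y : G => y * g * y⁻¹) with hO
    have hgO : g ∈ O := ⟨1, by simp⟩
    have hOnb : O ∈ 𝓝 g := by
      rw [← hmap]
      exact Filter.mem_map.2 (Filter.univ_mem' fun y => Set.mem_range_self y)
    have hOopen : IsOpen O := by
      rw [isOpen_iff_mem_nhds]
      rintro p ⟨x₀, rfl⟩
      set φ := (Homeomorph.mulLeft x₀).trans (Homeomorph.mulRight x₀⁻¹) with hφ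
      have hφg : φ g = x₀ * g * x₀⁻¹ := rfl
      have hsub : φ '' O ⊆ O := by
        rintro - ⟨-, ⟨z, rfl⟩, rfl⟩
        refine ⟨x₀ * z, ?_⟩
        show x₀ * z * g * (x₀ * z)⁻¹ = φ (z * g * z⁻¹)
        simp only [hφ, Homeomorph.trans_apply, Homeomorph.coe_mulLeft,
          Homeomorph.coe_mulRight, mul_inv_rev]
        group
      have himg : φ '' O ∈ 𝓝 (φ g) := φ.isOpenMap.image_mem_nhds hOnb
      rw [hφg] at himg
      exact Filter.mem_of_superset himg hsub
    have hOclosed : IsClosed O := (isCompact_range hcs.continuous).isClosed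
    have hsubcc : connectedComponent g ⊆ O :=
      IsClopen.connectedComponent_subset ⟨hOclosed, hOopen⟩ hgO
    obtain ⟨y, hy⟩ := hsubcc hx
    rw [← hy]
    calc (y * g * y⁻¹) ^ n = y * g ^ n * y⁻¹ := conj_pow
      _ = 1 := by rw [hgn]; simp
end

section
/- Let G be a compact group, N a closed normal subgroup, and fix natural numbers n₁, n₂. Then the probability (with respect to Haar measure on G×G) that [x^{n₁}, y^{n₂}] ∈ N is equal to the probability (with respect to Haar measure on (G/N)×(G/N)) that [u^{n₁}, v^{n₂}] = 1; in particular the generalized commutativity degree of G/N is at least that of G. -/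
open MeasureTheory Set
open scoped ENNReal NNReal

/-- In a space with an outer regular finite measure, any measurable set can be squeezed
between a closed and an open set up to arbitrarily small error. -/
private lemma regular_single_aux {X : Type*} [TopologicalSpace X] [MeasurableSpace X]
    (μ : Measure X) [IsFiniteMeasure μ] [μ.OuterRegular] {s : Set X} (hs : MeasurableSet s)
    {ε : ℝ≥0∞} (hε : 0 < ε) :
    ∃ F U : Set X, IsClosed F ∧ IsOpen U ∧ F ⊆ s ∧ s ⊆ U ∧ μ (U \ F) < ε := by
  obtain ⟨U, hsU, hUo, -, hU⟩ :=
    hs.exists_isOpen_diff_lt (measure_ne_top μ s) (ε := ε / 2) (by simp [hε.ne'])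
  obtain ⟨V, hsV, hVo, -, hV⟩ :=
    hs.compl.exists_isOpen_diff_lt (measure_ne_top μ sᶜ) (ε := ε / 2) (by simp [hε.ne'])
  refine ⟨Vᶜ, U, hVo.isClosed_compl, hUo, ?_, hsU, ?_⟩
  · rw [Set.compl_subset_comm]
    simpa using hsV
  · have hsub : U \ Vᶜ ⊆ (U \ s) ∪ (V \ sᶜ) := by
      intro x hx
      by_cases hxs : x ∈ s
      · exact Or.inr ⟨by simpa using hx.2, by simpa using hxs⟩
      · exact Or.inl ⟨hx.1, hxs⟩
    calc μ (U \ Vᶜ) ≤ μ ((U \ s) ∪ (V \ sᶜ)) := measure_mono hsub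
      _ ≤ μ (U \ s) + μ (V \ sᶜ) := measure_union_le _ _
      _ < ε / 2 + ε / 2 := ENNReal.add_lt_add hU hV
      _ = ε := ENNReal.add_halves ε

/-- The product of two outer regular probability measures is regular in the sense that
any measurable set of the product can be squeezed between a closed and an open set. -/
private lemma prod_regular_aux {X Y : Type*} [TopologicalSpace X] [MeasurableSpace X]
    [OpensMeasurableSpace X] [TopologicalSpace Y] [MeasurableSpace Y] [OpensMeasurableSpace Y]
    (μ : Measure X) (ν : Measure Y) [IsProbabilityMeasure μ] [IsProbabilityMeasure ν]
    [μ.OuterRegular] [ν.OuterRegular] {B : Set (X × Y)} (hB : MeasurableSet B) :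
    ∀ ε : ℝ≥0∞, 0 < ε →
      ∃ F U : Set (X × Y), IsClosed F ∧ IsOpen U ∧ F ⊆ B ∧ B ⊆ U ∧ (μ.prod ν) (U \ F) < ε := by
  refine MeasurableSpace.induction_on_inter (C := fun B _ => ∀ ε : ℝ≥0∞, 0 < ε →
      ∃ F U : Set (X × Y), IsClosed F ∧ IsOpen U ∧ F ⊆ B ∧ B ⊆ U ∧ (μ.prod ν) (U \ F) < ε)
    generateFrom_prod.symm isPiSystem_prod ?_ ?_ ?_ ?_ _ hB
  · -- empty set
    intro ε hε
    exact ⟨∅, ∅, isClosed_empty, isOpen_empty, le_rfl, le_rfl, by simpa using hε⟩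
  · -- boxes
    rintro _ ⟨s, hs, t, ht, rfl⟩ ε hε
    have hε2 : (0 : ℝ≥0∞) < ε / 2 := by simp [ENNReal.div_pos_iff, hε.ne']
    obtain ⟨F₁, U₁, hF₁c, hU₁o, hF₁s, hsU₁, h₁⟩ := regular_single_aux μ hs hε2
    obtain ⟨F₂, U₂, hF₂c, hU₂o, hF₂t, htU₂, h₂⟩ := regular_single_aux ν ht hε2
    refine ⟨F₁ ×ˢ F₂, U₁ ×ˢ U₂, hF₁c.prod hF₂c, hU₁o.prod hU₂o,
      Set.prod_mono hF₁s hF₂t, Set.prod_mono hsU₁ htU₂, ?_⟩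
    have hsub : (U₁ ×ˢ U₂) \ (F₁ ×ˢ F₂) ⊆ ((U₁ \ F₁) ×ˢ U₂) ∪ (U₁ ×ˢ (U₂ \ F₂)) := by
      rintro ⟨x, y⟩ ⟨⟨hxU, hyU⟩, hxy⟩
      by_cases hxF : x ∈ F₁
      · exact Or.inr ⟨hxU, hyU, fun hyF => hxy ⟨hxF, hyF⟩⟩
      · exact Or.inl ⟨⟨hxU, hxF⟩, hyU⟩
    calc (μ.prod ν) ((U₁ ×ˢ U₂) \ (F₁ ×ˢ F₂))
        ≤ (μ.prod ν) (((U₁ \ F₁) ×ˢ U₂) ∪ (U₁ ×ˢ (U₂ \ F₂))) := measure_mono hsub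
      _ ≤ (μ.prod ν) ((U₁ \ F₁) ×ˢ U₂) + (μ.prod ν) (U₁ ×ˢ (U₂ \ F₂)) := measure_union_le _ _
      _ = μ (U₁ \ F₁) * ν U₂ + μ U₁ * ν (U₂ \ F₂) := by
          rw [Measure.prod_prod, Measure.prod_prod]
      _ ≤ μ (U₁ \ F₁) * 1 + 1 * ν (U₂ \ F₂) := by
          gcongr
          · exact prob_le_one
          · exact prob_le_one
      _ = μ (U₁ \ F₁) + ν (U₂ \ F₂) := by rw [mul_one, one_mul]
      _ < ε / 2 + ε / 2 := ENNReal.add_lt_add h₁ h₂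
      _ = ε := ENNReal.add_halves ε
  · -- complement
    intro t _ IH ε hε
    obtain ⟨F, U, hFc, hUo, hFt, htU, hμ⟩ := IH ε hε
    refine ⟨Uᶜ, Fᶜ, hUo.isClosed_compl, hFc.isOpen_compl,
      Set.compl_subset_compl.mpr htU, Set.compl_subset_compl.mpr hFt, ?_⟩
    have : Fᶜ \ Uᶜ = U \ F := by
      ext x; simp [Set.mem_diff, and_comm]
    rwa [this]
  · -- countable disjoint union
    intro f hdisj hfm IH ε hε
    have hε2 : (0 : ℝ≥0∞) < ε / 2 := by simp [ENNReal.div_pos_iff, hε.ne']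
    obtain ⟨δ, δpos, hδ⟩ := ENNReal.exists_pos_sum_of_countable' hε2.ne' ℕ
    choose Fs Us hFc hUo hFsub hUsub hμs using fun n => IH n (δ n) (δpos n)
    -- tail control
    have hsum : ∑' n, (μ.prod ν) (f n) ≠ ∞ := by
      rw [← measure_iUnion hdisj hfm]
      exact measure_ne_top _ _
    obtain ⟨N, hN⟩ :=
      ((ENNReal.tendsto_sum_nat_add (fun n => (μ.prod ν) (f n)) hsum).eventually_lt_const
        hε2).exists
    refine ⟨⋃ n ∈ Finset.range N, Fs n, ⋃ n, Us n,
      Set.Finite.isClosed_biUnion (Finset.range N).finite_toSet (fun n _ => hFc n),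
      isOpen_iUnion hUo, ?_, Set.iUnion_mono hUsub, ?_⟩
    · exact Set.iUnion₂_subset fun n _ => (hFsub n).trans (Set.subset_iUnion f n)
    · have hsub : (⋃ n, Us n) \ (⋃ n ∈ Finset.range N, Fs n) ⊆
          (⋃ n, (Us n \ Fs n)) ∪ ⋃ k, f (k + N) := by
        rintro x ⟨hxU, hxF⟩
        obtain ⟨n, hn⟩ := Set.mem_iUnion.1 hxU
        by_cases hxFn : x ∈ Fs n
        · have hnN : N ≤ n := by
            by_contra h
            exact hxF (Set.mem_biUnion (Finset.mem_range.2 (lt_of_not_ge h)) hxFn)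
          refine Or.inr (Set.mem_iUnion.2 ⟨n - N, ?_⟩)
          rw [Nat.sub_add_cancel hnN]
          exact hFsub n hxFn
        · exact Or.inl (Set.mem_iUnion.2 ⟨n, hn, hxFn⟩)
      calc (μ.prod ν) ((⋃ n, Us n) \ ⋃ n ∈ Finset.range N, Fs n)
          ≤ (μ.prod ν) ((⋃ n, (Us n \ Fs n)) ∪ ⋃ k, f (k + N)) := measure_mono hsub
        _ ≤ (μ.prod ν) (⋃ n, (Us n \ Fs n)) + (μ.prod ν) (⋃ k, f (k + N)) := measure_union_le _ _
        _ ≤ (∑' n, (μ.prod ν) (Us n \ Fs n)) + ∑' k, (μ.prod ν) (f (k + N)) := by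
            gcongr <;> exact measure_iUnion_le _
        _ ≤ (∑' n, δ n) + ∑' k, (μ.prod ν) (f (k + N)) := by
            gcongr with n
            exact (hμs n).le
        _ < ε / 2 + ε / 2 := ENNReal.add_lt_add hδ hN
        _ = ε := ENNReal.add_halves ε

/-- Let `G` be a compact group, `N` a closed normal subgroup and `n₁ n₂` natural numbers.
The probability that `[x^{n₁}, y^{n₂}] ∈ N` for Haar-random `x, y ∈ G` equals the
probability that `[u^{n₁}, v^{n₂}] = 1` for Haar-random `u, v ∈ G/N`; in particular the
generalized commutativity degree of `G/N` is at least that of `G`. -/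
theorem generalized_commutativity_degree_quotient {G : Type*} [Group G] [TopologicalSpace G]
    [IsTopologicalGroup G] [CompactSpace G] [MeasurableSpace G] [BorelSpace G]
    (N : Subgroup G) [N.Normal] (hN : IsClosed (N : Set G)) (n₁ n₂ : ℕ)
    [MeasurableSpace (G ⧸ N)] [BorelSpace (G ⧸ N)]
    (ν : Measure G) [ν.IsHaarMeasure] [IsProbabilityMeasure ν]
    (ν' : Measure (G ⧸ N)) [ν'.IsHaarMeasure] [IsProbabilityMeasure ν'] :
    (ν.prod ν) {p : G × G | p.1 ^ n₁ * p.2 ^ n₂ * (p.1 ^ n₁)⁻¹ * (p.2 ^ n₂)⁻¹ ∈ N} =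
        (ν'.prod ν') {q : (G ⧸ N) × (G ⧸ N) | q.1 ^ n₁ * q.2 ^ n₂ = q.2 ^ n₂ * q.1 ^ n₁} ∧
      (ν.prod ν) {p : G × G | p.1 ^ n₁ * p.2 ^ n₂ = p.2 ^ n₂ * p.1 ^ n₁} ≤
        (ν'.prod ν') {q : (G ⧸ N) × (G ⧸ N) | q.1 ^ n₁ * q.2 ^ n₂ = q.2 ^ n₂ * q.1 ^ n₁} := by
  haveI := hN
  -- the quotient map
  set π : G →* G ⧸ N := QuotientGroup.mk' N with hπ
  have hcont : Continuous π := continuous_quotient_mk'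
  have hsurj : Function.Surjective π := QuotientGroup.mk'_surjective N
  -- G⧸N is locally compact (it is compact)
  haveI : LocallyCompactSpace (G ⧸ N) :=
    IsCompact.locallyCompactSpace_of_mem_nhds_of_group (x := (1 : G ⧸ N))
      isCompact_univ Filter.univ_mem
  -- the pushforward of ν is a Haar probability measure, hence equals ν'
  haveI : (ν.map π).IsHaarMeasure :=
    Measure.isHaarMeasure_map_of_isFiniteMeasure ν π hcont hsurj
  haveI : IsProbabilityMeasure (ν.map π) :=
    Measure.isProbabilityMeasure_map hcont.measurable.aemeasurable
  have hmap : ν.map π = ν' :=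
    Measure.isHaarMeasure_eq_of_isProbabilityMeasure _ _
  -- pushforward of the product measure
  set f : G × G → (G ⧸ N) × (G ⧸ N) := Prod.map π π with hf
  have hfmeas : Measurable f :=
    (hcont.measurable.comp measurable_fst).prodMk (hcont.measurable.comp measurable_snd)
  have hfcont : Continuous f := (hcont.comp continuous_fst).prodMk (hcont.comp continuous_snd)
  have hprod : ν'.prod ν' = (ν.prod ν).map f := by
    rw [← hmap, Measure.map_prod_map _ _ hcont.measurable hcont.measurable]
  -- sets
  set S' : Set ((G ⧸ N) × (G ⧸ N)) :=
      {q : (G ⧸ N) × (G ⧸ N) | q.1 ^ n₁ * q.2 ^ n₂ = q.2 ^ n₂ * q.1 ^ n₁} with hS'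
  set A : Set (G × G) :=
      {p : G × G | p.1 ^ n₁ * p.2 ^ n₂ * (p.1 ^ n₁)⁻¹ * (p.2 ^ n₂)⁻¹ ∈ N} with hA
  -- the preimage of the commuting set is the set with commutator in N
  have hpre : f ⁻¹' S' = A := by
    ext ⟨x, y⟩
    simp only [hS', hA, hf, Set.mem_preimage, Set.mem_setOf_eq, Prod.map_fst, Prod.map_snd]
    rw [hπ]
    simp only [QuotientGroup.mk'_apply, ← QuotientGroup.mk_pow, ← QuotientGroup.mk_mul]
    rw [QuotientGroup.eq]
    constructor
    · intro h
      have := Subgroup.Normal.conj_mem ‹N.Normal› _ h (y ^ n₂ * x ^ n₁)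
      convert N.inv_mem this using 1
      group
    · intro h
      have := Subgroup.Normal.conj_mem ‹N.Normal› _ (N.inv_mem h) ((x ^ n₁)⁻¹ * (y ^ n₂)⁻¹)
      convert this using 1
      group
  -- S' is closed
  have hS'closed : IsClosed S' :=
    isClosed_eq (by fun_prop) (by fun_prop)
  -- the key equality of outer measures
  have hle : ((ν.prod ν).map f) S' ≤ (ν.prod ν) A := by
    apply ENNReal.le_of_forall_pos_le_add
    intro ε hε _
    have hεpos : (0 : ℝ≥0∞) < (ε : ℝ≥0∞) := by exact_mod_cast hε
    -- squeeze a measurable hull of A between itself and an open set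
    obtain ⟨F, U, hFc, hUo, hFB, hBU, hμ⟩ :=
      prod_regular_aux ν ν (measurableSet_toMeasurable (ν.prod ν) A) (ε : ℝ≥0∞) hεpos
    have hAU : A ⊆ U := (subset_toMeasurable _ _).trans hBU
    have hμU : (ν.prod ν) U ≤ (ν.prod ν) A + ε := by
      have hsub : U ⊆ toMeasurable (ν.prod ν) A ∪ (U \ F) := by
        intro x hx
        by_cases hxB : x ∈ toMeasurable (ν.prod ν) A
        · exact Or.inl hxB
        · exact Or.inr ⟨hx, fun hxF => hxB (hFB hxF)⟩
      calc (ν.prod ν) U ≤ (ν.prod ν) (toMeasurable (ν.prod ν) A) + (ν.prod ν) (U \ F) :=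
            (measure_mono hsub).trans (measure_union_le _ _)
        _ ≤ (ν.prod ν) A + ε := by
            rw [measure_toMeasurable]
            exact add_le_add le_rfl hμ.le
    -- the saturated open set around S'
    haveI : T3Space (G ⧸ N) := QuotientGroup.instT3Space N
    set t : Set ((G ⧸ N) × (G ⧸ N)) := (f '' Uᶜ)ᶜ with ht
    have htopen : IsOpen t :=
      ((hUo.isClosed_compl.isCompact.image hfcont).isClosed).isOpen_compl
    have hS't : S' ⊆ t := by
      intro q hq
      simp only [ht, Set.mem_compl_iff, Set.mem_image]
      rintro ⟨p, hp, rfl⟩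
      exact hp (hAU (hpre ▸ hq))
    have hpret : f ⁻¹' t ⊆ U := by
      intro p hp
      by_contra hpU
      exact hp (Set.mem_image_of_mem f hpU)
    -- finite cover of S' by open boxes inside t
    have hS'cpt : IsCompact S' := hS'closed.isCompact
    have hboxes : ∀ q : S', ∃ V W : Set (G ⧸ N), IsOpen V ∧ IsOpen W ∧
        (q : (G ⧸ N) × (G ⧸ N)).1 ∈ V ∧ (q : (G ⧸ N) × (G ⧸ N)).2 ∈ W ∧ V ×ˢ W ⊆ t := by
      rintro ⟨⟨a, b⟩, hq⟩
      obtain ⟨V, W, hVo, hWo, haV, hbW, hVW⟩ := isOpen_prod_iff.1 htopen a b (hS't hq)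
      exact ⟨V, W, hVo, hWo, haV, hbW, hVW⟩
    choose V W hVo hWo hqV hqW hbox using hboxes
    obtain ⟨s, hs⟩ := hS'cpt.elim_finite_subcover (fun q : S' => V q ×ˢ W q)
      (fun q => (hVo q).prod (hWo q))
      (fun q hq => Set.mem_iUnion.2 ⟨⟨q, hq⟩, hqV ⟨q, hq⟩, hqW ⟨q, hq⟩⟩)
    set E : Set ((G ⧸ N) × (G ⧸ N)) := ⋃ q ∈ s, V q ×ˢ W q with hE
    have hEmeas : MeasurableSet E :=
      s.measurableSet_biUnion fun q _ => ((hVo q).measurableSet).prod ((hWo q).measurableSet)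
    have hEt : E ⊆ t := Set.iUnion₂_subset fun q _ => hbox q
    calc ((ν.prod ν).map f) S' ≤ ((ν.prod ν).map f) E := measure_mono hs
      _ = (ν.prod ν) (f ⁻¹' E) := Measure.map_apply hfmeas hEmeas
      _ ≤ (ν.prod ν) U := measure_mono ((Set.preimage_mono hEt).trans hpret)
      _ ≤ (ν.prod ν) A + ε := hμU
  have hge : (ν.prod ν) A ≤ ((ν.prod ν).map f) S' := by
    rw [← hpre]
    exact Measure.le_map_apply hfmeas.aemeasurable S'
  have key : (ν.prod ν) A = (ν'.prod ν') S' := by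
    rw [hprod]
    exact le_antisymm hge hle
  refine ⟨key, ?_⟩
  rw [← key]
  apply measure_mono
  intro ⟨x, y⟩ h
  simp only [hA, Set.mem_setOf_eq] at h ⊢
  rw [h]
  simpa using N.one_mem
end
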